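/- Let k < 0, r = −3/(2k), and f(x) = −(1/|k|^{α+1}) ∫_{−1}^{kx+1/2} t(1/2−t)^α/√(1−t²) dt for α ≥ 0. Then 2∫_0^r f(x) dx = −(2/|k|^{α+2}) ∫_{−1}^{1/2} t(1/2−t)^{α+1}/√(1−t²) dt. -/

import Mathlib

open MeasureTheory Set intervalIntegral

theorem vertical_profile_area (α k : ℝ) (hα : 0 ≤ α) (hk : k < 0)
    (r : ℝ) (hr : r = -3 / (2 * k))
    (f : ℝ → ℝ)
    (hf : ∀ x, f x = -(1 / |k| ^ (α + 1)) *
      ∫ t in (-1 : ℝ)..(k * x + 1 / 2),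
        t * (1 / 2 - t) ^ α / Real.sqrt (1 - t ^ 2)) :
    2 * ∫ x in (0 : ℝ)..r, f x =
      -(2 / |k| ^ (α + 2)) *
        ∫ t in (-1 : ℝ)..(1 / 2),
          t * (1 / 2 - t) ^ (α + 1) / Real.sqrt (1 - t ^ 2) := by
  have hk0 : k ≠ 0 := hk.ne
  set g : ℝ → ℝ := fun t => t * (1 / 2 - t) ^ α / Real.sqrt (1 - t ^ 2) with hgdef
  -- Step 1: integrability of g on [-1, 1/2]
  have hmeas : Measurable g := by rw [hgdef]; fun_prop
  have hgint : IntervalIntegrable g volume (-1) (1/2) := by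
    have base : IntervalIntegrable (fun x : ℝ => x ^ (-(1/2) : ℝ)) volume 0 (3/2) :=
      intervalIntegrable_rpow' (by norm_num)
    have hdom0 := base.comp_add_right 1
    norm_num at hdom0
    have hdom := hdom0.const_mul (Real.sqrt 2 * (3/2 : ℝ) ^ α)
    apply hdom.mono_fun' hmeas.aestronglyMeasurable
    rw [uIoc_of_le (by norm_num : (-1:ℝ) ≤ 1/2)]
    filter_upwards [ae_restrict_mem measurableSet_Ioc] with t ht
    obtain ⟨ht1, ht2⟩ := ht
    have h1 : (0:ℝ) < t + 1 := by linarith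
    have h2 : (0:ℝ) < 1 - t ^ 2 := by nlinarith
    have hs : 0 < Real.sqrt (1 - t ^ 2) := Real.sqrt_pos.2 h2
    have hsa : 0 < Real.sqrt (t + 1) := Real.sqrt_pos.2 h1
    have e1 : (t + 1) ^ (-(1/2) : ℝ) = (Real.sqrt (t + 1))⁻¹ := by
      rw [Real.rpow_neg h1.le, Real.sqrt_eq_rpow]
    have ha : Real.sqrt (t + 1) ≤ Real.sqrt 2 * Real.sqrt (1 - t ^ 2) := by
      rw [← Real.sqrt_mul (by norm_num : (0:ℝ) ≤ 2)]
      exact Real.sqrt_le_sqrt (by nlinarith)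
    have hb : |t| * (1/2 - t) ^ α ≤ (3/2 : ℝ) ^ α := by
      calc |t| * (1/2 - t) ^ α ≤ 1 * (3/2 : ℝ) ^ α := by
            apply mul_le_mul _ (Real.rpow_le_rpow (by linarith) (by linarith) hα)
              (Real.rpow_nonneg (by linarith) α) zero_le_one
            rw [abs_le]; constructor <;> linarith
        _ = (3/2 : ℝ) ^ α := one_mul _
    have hnorm : ‖g t‖ = |t| * (1/2 - t) ^ α / Real.sqrt (1 - t ^ 2) := by
      rw [hgdef]
      rw [Real.norm_eq_abs, abs_div, abs_mul, abs_of_nonneg (Real.rpow_nonneg (by linarith) α),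
        abs_of_nonneg (Real.sqrt_nonneg _)]
    rw [hnorm, e1]
    rw [show Real.sqrt 2 * (3/2:ℝ)^α * (Real.sqrt (t+1))⁻¹
        = (Real.sqrt 2 * (3/2:ℝ)^α) / Real.sqrt (t+1) by ring]
    rw [div_le_div_iff₀ hs hsa]
    have hmm := mul_le_mul hb ha (Real.sqrt_nonneg _) (Real.rpow_nonneg (by norm_num) α)
    calc |t| * (1/2 - t) ^ α * Real.sqrt (t+1)
        ≤ (3/2:ℝ)^α * (Real.sqrt 2 * Real.sqrt (1 - t^2)) := hmm
      _ = Real.sqrt 2 * (3/2:ℝ)^α * Real.sqrt (1 - t^2) := by ring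
  -- Step 2: Fubini
  have fub : (∫ u in (-1:ℝ)..(1/2), ∫ t in (-1:ℝ)..u, g t)
      = ∫ t in (-1:ℝ)..(1/2), (1/2 - t) * g t := by
    set μ := volume.restrict (Ioc (-1:ℝ) (1/2)) with hμ
    have hgOn : IntegrableOn g (Ioc (-1:ℝ) (1/2)) volume :=
      (intervalIntegrable_iff_integrableOn_Ioc_of_le (by norm_num)).1 hgint
    have hone : IntegrableOn (fun _ : ℝ => (1:ℝ)) (Ioc (-1:ℝ) (1/2)) volume :=
      integrableOn_const measure_Ioc_lt_top.ne
    have hint2 : Integrable (fun p : ℝ × ℝ => g p.2) (μ.prod μ) := by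
      have := Integrable.mul_prod (hone : Integrable _ μ) (hgOn : Integrable g μ)
      simpa only [one_mul] using this
    have hS : MeasurableSet {q : ℝ × ℝ | q.2 ≤ q.1} :=
      measurableSet_le measurable_snd measurable_fst
    have hinth : Integrable ({q : ℝ × ℝ | q.2 ≤ q.1}.indicator (fun q => g q.2)) (μ.prod μ) :=
      hint2.indicator hS
    have swap := MeasureTheory.integral_integral_swap
      (f := fun u t => {q : ℝ × ℝ | q.2 ≤ q.1}.indicator (fun q => g q.2) (u, t))
      (μ := μ) (ν := μ) hinth
    have hL : (∫ u, ∫ t, {q : ℝ × ℝ | q.2 ≤ q.1}.indicator (fun q => g q.2) (u, t) ∂μ ∂μ)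
        = ∫ u in (-1:ℝ)..(1/2), ∫ t in (-1:ℝ)..u, g t := by
      rw [intervalIntegral.integral_of_le (by norm_num : (-1:ℝ) ≤ 1/2)]
      apply setIntegral_congr_fun measurableSet_Ioc
      intro u hu
      dsimp only
      have e1 : (fun t => {q : ℝ × ℝ | q.2 ≤ q.1}.indicator (fun q => g q.2) (u, t))
          = (Iic u).indicator g := by
        funext t
        simp [Set.indicator_apply]
      rw [e1, hμ, setIntegral_indicator measurableSet_Iic,
        Set.Ioc_inter_Iic, min_eq_right hu.2,
        intervalIntegral.integral_of_le (by linarith [hu.1] : (-1:ℝ) ≤ u)]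
    have hR : (∫ t, ∫ u, {q : ℝ × ℝ | q.2 ≤ q.1}.indicator (fun q => g q.2) (u, t) ∂μ ∂μ)
        = ∫ t in (-1:ℝ)..(1/2), (1/2 - t) * g t := by
      rw [intervalIntegral.integral_of_le (by norm_num : (-1:ℝ) ≤ 1/2)]
      apply setIntegral_congr_fun measurableSet_Ioc
      intro t ht
      dsimp only
      have e1 : (fun u => {q : ℝ × ℝ | q.2 ≤ q.1}.indicator (fun q => g q.2) (u, t))
          = (Ici t).indicator (fun _ => g t) := by
        funext u
        simp [Set.indicator_apply]
      have e2 : Ioc (-1:ℝ) (1/2) ∩ Ici t = Icc t (1/2) := by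
        ext u
        simp only [mem_inter_iff, mem_Ioc, mem_Ici, mem_Icc]
        constructor
        · rintro ⟨⟨_, h2⟩, h3⟩; exact ⟨h3, h2⟩
        · rintro ⟨h3, h2⟩; exact ⟨⟨lt_of_lt_of_le ht.1 h3, h2⟩, h3⟩
      rw [e1, hμ, setIntegral_indicator measurableSet_Ici, e2, setIntegral_const]
      rw [measureReal_def, Real.volume_Icc, ENNReal.toReal_ofReal (by linarith [ht.2])]
      simp [smul_eq_mul]
    rw [← hL, swap, hR]
  -- Step 3: identify (1/2 - t) * g t with the (α+1)-integrand
  have hcong : (∫ t in (-1:ℝ)..(1/2), (1/2 - t) * g t)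
      = ∫ t in (-1:ℝ)..(1/2), t * (1/2 - t) ^ (α + 1) / Real.sqrt (1 - t ^ 2) := by
    apply intervalIntegral.integral_congr
    intro t ht
    rw [uIcc_of_le (by norm_num : (-1:ℝ) ≤ 1/2)] at ht
    dsimp only
    rw [hgdef]
    rcases eq_or_lt_of_le ht.2 with h | h
    · rw [← h, sub_self, Real.zero_rpow (by positivity : α + 1 ≠ 0)]
      simp
    · rw [Real.rpow_add_one (by linarith : (1/2 : ℝ) - t ≠ 0)]
      ring
  -- Step 4: substitution u = k x + 1/2 on the left-hand side
  simp only [hf]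
  rw [intervalIntegral.integral_const_mul]
  have comp : (∫ x in (0:ℝ)..r, ∫ t in (-1:ℝ)..(k * x + 1/2), g t)
      = k⁻¹ • ∫ u in (k * 0 + 1/2)..(k * r + 1/2), ∫ t in (-1:ℝ)..u, g t :=
    intervalIntegral.integral_comp_mul_add (fun u => ∫ t in (-1:ℝ)..u, g t) hk0 (1/2)
  rw [show k * 0 + 1/2 = (1/2 : ℝ) by ring,
    show k * r + 1/2 = (-1 : ℝ) by rw [hr]; field_simp; ring,
    intervalIntegral.integral_symm (-1 : ℝ) (1/2)] at comp
  rw [comp, fub, hcong, smul_eq_mul]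
  -- Step 5: arithmetic
  have habs : |k| = -k := abs_of_neg hk
  have hA : (0:ℝ) < |k| ^ (α + 1) := Real.rpow_pos_of_pos (abs_pos.2 hk0) _
  have hpow : |k| ^ (α + 2) = |k| ^ (α + 1) * |k| := by
    rw [show α + 2 = (α + 1) + 1 by ring, Real.rpow_add_one (abs_ne_zero.2 hk0)]
  rw [hpow, habs] at *
  field_simp
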